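/- Let 𝒫_A be an anonymous single-peaked domain satisfying cyclical inclusion for both sides. If 𝒫_A satisfies top dominance for neither men nor women, then no stable matching rule on 𝒫_A is strategy-proof. -/

import Mathlib

/-- A one-to-one matching between men `M` and women `W`; `none` means unmatched. -/
structure Matching (M W : Type*) where
  menMatch : M → Option W
  womenMatch : W → Option M
  consistent : ∀ m w, menMatch m = some w ↔ womenMatch w = some m

/-- A preference profile: each man has a strict linear order over `W ∪ {∅}`
(encoded as `Option W`, with `none` the outside option), and each woman over `M ∪ {∅}`. -/
structure Profile (M W : Type*) where
  menPref : M → LinearOrder (Option W)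
  womenPref : W → LinearOrder (Option M)

variable {M W : Type*}

def IndividuallyRational (μ : Matching M W) (P : Profile M W) : Prop :=
  (∀ m, (P.menPref m).le none (μ.menMatch m)) ∧
  (∀ w, (P.womenPref w).le none (μ.womenMatch w))

def Blocks (m : M) (w : W) (μ : Matching M W) (P : Profile M W) : Prop :=
  (P.menPref m).lt (μ.menMatch m) (some w) ∧
  (P.womenPref w).lt (μ.womenMatch w) (some m)

def Stable (μ : Matching M W) (P : Profile M W) : Prop :=
  IndividuallyRational μ P ∧ ∀ m w, ¬ Blocks m w μ P

/-- The men-optimal stable matching: stable, and every man weakly prefers it to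
any stable matching.  This characterizes the outcome of the men-proposing
deferred acceptance (MPDA) algorithm. -/
def MenOptimalStable (μ : Matching M W) (P : Profile M W) : Prop :=
  Stable μ P ∧
    ∀ ν : Matching M W, Stable ν P → ∀ m, (P.menPref m).le (ν.menMatch m) (μ.menMatch m)

/-- The women-optimal stable matching, i.e. the outcome of women-proposing DA. -/
def WomenOptimalStable (μ : Matching M W) (P : Profile M W) : Prop :=
  Stable μ P ∧
    ∀ ν : Matching M W, Stable ν P → ∀ w, (P.womenPref w).le (ν.womenMatch w) (μ.womenMatch w)

def Matching.empty (M W : Type*) : Matching M W :=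
  ⟨fun _ => none, fun _ => none, by intro m w; simp⟩

/-- The men-proposing deferred acceptance rule `D^M`. -/
noncomputable def mpda (P : Profile M W) : Matching M W :=
  letI := Classical.dec (∃ μ : Matching M W, MenOptimalStable μ P)
  if h : ∃ μ : Matching M W, MenOptimalStable μ P then h.choose else Matching.empty M W

/-- The women-proposing deferred acceptance rule `D^W`. -/
noncomputable def wpda (P : Profile M W) : Matching M W :=
  letI := Classical.dec (∃ μ : Matching M W, WomenOptimalStable μ P)
  if h : ∃ μ : Matching M W, WomenOptimalStable μ P then h.choose else Matching.empty M W

/-- A domain of preference profiles: a set of admissible preferences for each agent. -/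
structure Domain (M W : Type*) where
  men : M → Set (LinearOrder (Option W))
  women : W → Set (LinearOrder (Option M))

/-- Membership of a profile in (the product domain generated by) a domain. -/
def Domain.mem (D : Domain M W) (P : Profile M W) : Prop :=
  (∀ m, P.menPref m ∈ D.men m) ∧ (∀ w, P.womenPref w ∈ D.women w)

def Profile.updateMan [DecidableEq M] (P : Profile M W) (m : M)
    (p : LinearOrder (Option W)) : Profile M W :=
  ⟨Function.update P.menPref m p, P.womenPref⟩

def Profile.updateWoman [DecidableEq W] (P : Profile M W) (w : W)
    (p : LinearOrder (Option M)) : Profile M W :=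
  ⟨P.menPref, Function.update P.womenPref w p⟩

/-- A matching rule is stable on a domain if it selects a stable matching at
every profile of the domain. -/
def StableOn (D : Domain M W) (φ : Profile M W → Matching M W) : Prop :=
  ∀ P, D.mem P → Stable (φ P) P

/-- Strategy-proofness on a domain: no single agent can strictly gain by
misreporting an admissible preference. -/
def StrategyProofOn [DecidableEq M] [DecidableEq W] (D : Domain M W)
    (φ : Profile M W → Matching M W) : Prop :=
  ∀ P, D.mem P →
    (∀ m p, p ∈ D.men m →
      (P.menPref m).le ((φ (P.updateMan m p)).menMatch m) ((φ P).menMatch m)) ∧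
    (∀ w p, p ∈ D.women w →
      (P.womenPref w).le ((φ (P.updateWoman w p)).womenMatch w) ((φ P).womenMatch w))

/-- A coalition `(Sm, Sw)` manipulates `φ` at `P` via the admissible profile `Q`
(which agrees with `P` outside the coalition): every coalition member is
strictly better off at `φ Q` than at `φ P` according to true preferences. -/
def Manipulation (D : Domain M W) (φ : Profile M W → Matching M W)
    (P Q : Profile M W) (Sm : Set M) (Sw : Set W) : Prop :=
  D.mem P ∧ D.mem Q ∧
  (∀ m ∉ Sm, Q.menPref m = P.menPref m) ∧
  (∀ w ∉ Sw, Q.womenPref w = P.womenPref w) ∧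
  (∀ m ∈ Sm, (P.menPref m).lt ((φ P).menMatch m) ((φ Q).menMatch m)) ∧
  (∀ w ∈ Sw, (P.womenPref w).lt ((φ P).womenMatch w) ((φ Q).womenMatch w))

/-- Group strategy-proofness on a domain: no nonempty coalition can manipulate. -/
def GroupStrategyProofOn (D : Domain M W) (φ : Profile M W → Matching M W) : Prop :=
  ¬ ∃ (P Q : Profile M W) (Sm : Set M) (Sw : Set W),
      (Sm.Nonempty ∨ Sw.Nonempty) ∧ Manipulation D φ P Q Sm Sw

/-- Top dominance for women. -/
def TopDominanceWomen (D : Domain M W) : Prop :=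
  ∀ w : W, ∀ x : M, ∀ y z : Option M,
    (∃ P ∈ D.women w, P.lt y (some x) ∧ P.lt z y ∧ P.le none y) →
      ¬ ∃ P' ∈ D.women w, P'.lt z (some x) ∧ P'.lt y z ∧ P'.le none z

/-- Top dominance for men. -/
def TopDominanceMen (D : Domain M W) : Prop :=
  ∀ m : M, ∀ x : W, ∀ y z : Option W,
    (∃ P ∈ D.men m, P.lt y (some x) ∧ P.lt z y ∧ P.le none y) →
      ¬ ∃ P' ∈ D.men m, P'.lt z (some x) ∧ P'.lt y z ∧ P'.le none z

/-- Unrestricted top pairs for men. -/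
def UnrestrictedTopPairsMen (D : Domain M W) : Prop :=
  ∀ m : M,
    (∀ w w' : W, w ≠ w' → ∃ P ∈ D.men m, P.lt (some w') (some w) ∧
        ∀ z : Option W, z ≠ some w → z ≠ some w' → P.lt z (some w')) ∧
    (∀ w : W, ∃ P ∈ D.men m, P.lt none (some w) ∧
        ∀ z : Option W, z ≠ some w → z ≠ none → P.lt z none) ∧
    (∃ P ∈ D.men m, ∀ z : Option W, z ≠ none → P.lt z none)

/-- Unrestricted top pairs for women. -/
def UnrestrictedTopPairsWomen (D : Domain M W) : Prop :=
  ∀ w : W,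
    (∀ m m' : M, m ≠ m' → ∃ P ∈ D.women w, P.lt (some m') (some m) ∧
        ∀ z : Option M, z ≠ some m → z ≠ some m' → P.lt z (some m')) ∧
    (∀ m : M, ∃ P ∈ D.women w, P.lt none (some m) ∧
        ∀ z : Option M, z ≠ some m → z ≠ none → P.lt z none) ∧
    (∃ P ∈ D.women w, ∀ z : Option M, z ≠ none → P.lt z none)

/-- Single-peakedness of a preference over `Option α` with respect to a prior
order `ord` on `α`:  moving away from the peak (the most preferred element of
`α`) on either side makes the preference decline. -/
def SinglePeaked {α : Type*} (ord : LinearOrder α) (P : LinearOrder (Option α)) : Prop :=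
  ∀ peak : α, (∀ a : α, P.le (some a) (some peak)) →
    ∀ a b : α, ((ord.le peak a ∧ ord.lt a b) ∨ (ord.lt b a ∧ ord.le a peak)) →
      P.lt (some b) (some a)

/-- The maximal single-peaked domain with respect to orders on men and women. -/
def maximalSinglePeakedDomain (ordM : LinearOrder M) (ordW : LinearOrder W) : Domain M W :=
  ⟨fun _ => {P | SinglePeaked ordW P}, fun _ => {P | SinglePeaked ordM P}⟩

/-- A domain is single-peaked if all admissible preferences are single-peaked. -/
def Domain.SinglePeakedDomain (D : Domain M W) (ordM : LinearOrder M)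
    (ordW : LinearOrder W) : Prop :=
  (∀ m, ∀ P ∈ D.men m, SinglePeaked ordW P) ∧ (∀ w, ∀ P ∈ D.women w, SinglePeaked ordM P)

/-- Anonymity: all men share the same admissible set, and all women do too. -/
def Domain.Anonymous (D : Domain M W) : Prop :=
  (∀ m m' : M, D.men m = D.men m') ∧ (∀ w w' : W, D.women w = D.women w')

/-- Cyclical inclusion for men. -/
def CyclicalInclusionMen (D : Domain M W) : Prop :=
  ∀ m : M,
    (∃ P ∈ D.men m, ∀ z : Option W, z ≠ none → P.lt z none) ∧
    (∀ w w' : W,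
      (∃ P ∈ D.men m, P.lt (some w') (some w) ∧ P.lt none (some w')) →
      (∃ P ∈ D.men m, P.lt (some w) (some w') ∧ P.lt none (some w)))

/-- Cyclical inclusion for women. -/
def CyclicalInclusionWomen (D : Domain M W) : Prop :=
  ∀ w : W,
    (∃ P ∈ D.women w, ∀ z : Option M, z ≠ none → P.lt z none) ∧
    (∀ m m' : M,
      (∃ P ∈ D.women w, P.lt (some m') (some m) ∧ P.lt none (some m')) →
      (∃ P ∈ D.women w, P.lt (some m) (some m') ∧ P.lt none (some m)))

/-- The unrestricted domain: every strict linear order is admissible. -/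
def fullDomain (M W : Type*) : Domain M W :=
  ⟨fun _ => Set.univ, fun _ => Set.univ⟩



section LO
variable {β : Type*} (P : LinearOrder β) {a b c : β}

lemma lo_lt_trans (h : P.lt a b) (h' : P.lt b c) : P.lt a c := by
  letI := P; exact lt_trans h h'

lemma lo_lt_asymm (h : P.lt a b) (h' : P.lt b a) : False := by
  letI := P; exact absurd h' (lt_asymm h)

lemma lo_ne_of_lt (h : P.lt a b) : a ≠ b := by
  letI := P; exact ne_of_lt h

lemma lo_lt_of_le_of_lt (h : P.le a b) (h' : P.lt b c) : P.lt a c := by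
  letI := P; exact lt_of_le_of_lt h h'

lemma lo_lt_of_lt_of_le (h : P.lt a b) (h' : P.le b c) : P.lt a c := by
  letI := P; exact lt_of_lt_of_le h h'

lemma lo_not_le_of_lt (h : P.lt a b) (h' : P.le b a) : False := by
  letI := P; exact absurd h' (not_le_of_gt h)

lemma lo_lt_of_le_of_ne (h : P.le a b) (h' : a ≠ b) : P.lt a b := by
  letI := P; exact lt_of_le_of_ne h h'

lemma lo_total (a b : β) : P.lt a b ∨ a = b ∨ P.lt b a := by
  letI := P; rcases lt_trichotomy a b with h | h | h
  · exact Or.inl h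
  · exact Or.inr (Or.inl h)
  · exact Or.inr (Or.inr h)

lemma lo_le_of_lt (h : P.lt a b) : P.le a b := by
  letI := P; exact le_of_lt h

end LO

lemma exists_peak {α : Type*} [Fintype α] (hne : Nonempty α) (P : LinearOrder (Option α)) :
    ∃ p : α, ∀ a : α, P.le (some a) (some p) := by
  classical
  letI := P
  obtain ⟨p, _, hp⟩ := Finset.exists_max_image (Finset.univ : Finset α)
    (fun a => (some a : Option α)) ⟨Classical.arbitrary α, Finset.mem_univ _⟩
  exact ⟨p, fun a => hp a (Finset.mem_univ a)⟩

/-- From single-peakedness of the two B-pattern preferences, `b` and `c` lie on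
opposite sides of `x` in the prior order. -/
lemma sp_sides {α : Type*} [Fintype α] (ord : LinearOrder α)
    {P1 P2 : LinearOrder (Option α)} {x b c : α}
    (h1 : SinglePeaked ord P1) (h2 : SinglePeaked ord P2)
    (hP1a : P1.lt (some c) (some b)) (hP1b : P1.lt (some b) (some x))
    (hP2a : P2.lt (some b) (some c)) (hP2b : P2.lt (some c) (some x)) :
    (ord.lt b x ∧ ord.lt x c) ∨ (ord.lt c x ∧ ord.lt x b) := by
  obtain ⟨p1, hp1⟩ := exists_peak ⟨x⟩ P1
  obtain ⟨p2, hp2⟩ := exists_peak ⟨x⟩ P2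
  have hbx : b ≠ x := fun h => lo_ne_of_lt _ hP1b (congrArg some h)
  have hcx : c ≠ x := fun h => lo_ne_of_lt _ hP2b (congrArg some h)
  have hbc : c ≠ b := fun h => lo_ne_of_lt _ hP1a (congrArg some h)
  have hcx1 : P1.lt (some c) (some x) := lo_lt_trans _ hP1a hP1b
  have hbx2 : P2.lt (some b) (some x) := lo_lt_trans _ hP2a hP2b
  rcases lo_total ord b x with h1x | h | hx1
  · rcases lo_total ord c x with h2x | h | hx2
    · -- b < x, c < x : contradiction
      exfalso
      rcases lo_total ord b c with hbc' | h | hcb'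
      · -- b < c : use P1
        rcases (letI := ord; le_or_gt c p1) with hle | hlt
        · exact lo_lt_asymm _ hP1a (h1 p1 hp1 c b (Or.inr ⟨hbc', hle⟩))
        · exact lo_lt_asymm _ hcx1 (h1 p1 hp1 c x (Or.inl ⟨(letI := ord; le_of_lt hlt), h2x⟩))
      · exact hbc h.symm
      · -- c < b : use P2
        rcases (letI := ord; le_or_gt b p2) with hle | hlt
        · exact lo_lt_asymm _ hP2a (h2 p2 hp2 b c (Or.inr ⟨hcb', hle⟩))
        · exact lo_lt_asymm _ hbx2 (h2 p2 hp2 b x (Or.inl ⟨(letI := ord; le_of_lt hlt), h1x⟩))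
    · exact absurd h hcx
    · exact Or.inl ⟨h1x, hx2⟩
  · exact absurd h hbx
  · rcases lo_total ord c x with h2x | h | hx2
    · exact Or.inr ⟨h2x, hx1⟩
    · exact absurd h hcx
    · -- x < b, x < c : contradiction
      exfalso
      rcases lo_total ord b c with hbc' | h | hcb'
      · -- b < c : use P2
        rcases (letI := ord; le_or_gt p2 b) with hle | hlt
        · exact lo_lt_asymm _ hP2a (h2 p2 hp2 b c (Or.inl ⟨hle, hbc'⟩))
        · exact lo_lt_asymm _ hbx2 (h2 p2 hp2 b x (Or.inr ⟨hx1, (letI := ord; le_of_lt hlt)⟩))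
      · exact hbc h.symm
      · -- c < b : use P1
        rcases (letI := ord; le_or_gt p1 c) with hle | hlt
        · exact lo_lt_asymm _ hP1a (h1 p1 hp1 c b (Or.inl ⟨hle, hcb'⟩))
        · exact lo_lt_asymm _ hcx1 (h1 p1 hp1 c x (Or.inr ⟨hx2, (letI := ord; le_of_lt hlt)⟩))

lemma sp_pin {α : Type*} [Fintype α] (ord : LinearOrder α)
    {Q : LinearOrder (Option α)} {x b c : α}
    (hQ : SinglePeaked ord Q)
    (hside : (ord.lt b x ∧ ord.lt x c) ∨ (ord.lt c x ∧ ord.lt x b))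
    (h : Q.lt (some x) (some b)) : Q.lt (some c) (some x) := by
  obtain ⟨pq, hpq⟩ := exists_peak ⟨x⟩ Q
  rcases hside with ⟨hbx, hxc⟩ | ⟨hcx, hxb⟩
  · rcases (letI := ord; le_or_gt pq x) with hle | hlt
    · exact hQ pq hpq x c (Or.inl ⟨hle, hxc⟩)
    · exact absurd (hQ pq hpq x b (Or.inr ⟨hbx, (letI := ord; le_of_lt hlt)⟩))
        (fun hh => lo_lt_asymm _ h hh)
  · rcases (letI := ord; le_or_gt x pq) with hle | hlt
    · exact hQ pq hpq x c (Or.inr ⟨hcx, hle⟩)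
    · exact absurd (hQ pq hpq x b (Or.inl ⟨(letI := ord; le_of_lt hlt), hxb⟩))
        (fun hh => lo_lt_asymm _ h hh)
/-- From a violation of top dominance (plus single-peakedness and cyclical
inclusion) extract a "manipulation gadget": agents `a1 ≠ a2`, a third slot `τ`
(either a third agent or the outside option), and three admissible preferences
with the required patterns. -/
lemma extract_gadget {α : Type*} [Fintype α] (ord : LinearOrder α)
    (S : Set (LinearOrder (Option α)))
    (hSP : ∀ P ∈ S, SinglePeaked ord P)
    (hcyc : ∀ a a' : α,
      (∃ P ∈ S, P.lt (some a') (some a) ∧ P.lt none (some a')) →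
      (∃ P ∈ S, P.lt (some a) (some a') ∧ P.lt none (some a)))
    (x : α) (y z : Option α)
    (hP : ∃ P ∈ S, P.lt y (some x) ∧ P.lt z y ∧ P.le none y)
    (hP' : ∃ P ∈ S, P.lt z (some x) ∧ P.lt y z ∧ P.le none z) :
    ∃ (a1 a2 : α) (τ : Option α), a1 ≠ a2 ∧ τ ≠ some a1 ∧ τ ≠ some a2 ∧
      (∃ P ∈ S, P.lt (some a2) (some a1) ∧ P.lt none (some a2) ∧
        P.lt τ (some a2) ∧ P.le none τ) ∧
      (∃ P ∈ S, P.lt τ (some a1) ∧ P.lt (some a2) τ ∧ P.le none τ) ∧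
      (∃ P ∈ S, P.lt (some a1) (some a2) ∧ P.lt none (some a1) ∧ P.lt τ (some a1)) := by
  obtain ⟨P, hPS, hyx, hzy, hny⟩ := hP
  obtain ⟨P', hP'S, hzx', hyz', hnz'⟩ := hP'
  have hstrict : ∀ (Q : LinearOrder (Option α)) (a : α), Q.le none (some a) →
      Q.lt none (some a) := fun Q a h => lo_lt_of_le_of_ne _ h (fun hh => nomatch hh)
  match y, z with
  | none, none => exact absurd hzy (fun h => lo_lt_asymm _ h h)
  | none, some a =>
    -- P : a ≺ ∅ ≺ x ; P' : ∅ ≺ a ≺ x.  A-pattern with (x, a), τ = ∅.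
    refine ⟨x, a, none, ?_, by simp, by simp, ?_, ?_, ?_⟩
    · exact fun h => lo_ne_of_lt _ (lo_lt_trans _ hzy hyx) (congrArg some h.symm)
    · exact ⟨P', hP'S, hzx', hstrict _ _ (lo_le_of_lt _ hyz'), hyz', P'.le_refl _⟩
    · exact ⟨P, hPS, hyx, hzy, P.le_refl _⟩
    · obtain ⟨Q, hQS, hq1, hq2⟩ := hcyc x a ⟨P', hP'S, hzx', hstrict _ _ (lo_le_of_lt _ hyz')⟩
      exact ⟨Q, hQS, hq1, hq2, hq2⟩
  | some b, none =>
    -- P : ∅ ≺ b ≺ x ; P' : b ≺ ∅ ≺ x.  A-pattern with (x, b), τ = ∅.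
    have hnb : P.lt none (some b) := hstrict _ _ hny
    refine ⟨x, b, none, ?_, by simp, by simp, ?_, ?_, ?_⟩
    · exact fun h => lo_ne_of_lt _ hyx (congrArg some h.symm)
    · exact ⟨P, hPS, hyx, hnb, hnb, P.le_refl _⟩
    · exact ⟨P', hP'S, hzx', hyz', P'.le_refl _⟩
    · obtain ⟨Q, hQS, hq1, hq2⟩ := hcyc x b ⟨P, hPS, hyx, hnb⟩
      exact ⟨Q, hQS, hq1, hq2, hq2⟩
  | some b, some c =>
    have hnb : P.lt none (some b) := hstrict _ _ hny
    have hnc' : P'.lt none (some c) := hstrict _ _ hnz'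
    have hbc : b ≠ c := fun h => lo_ne_of_lt _ hzy (congrArg some h.symm)
    have hbx : b ≠ x := fun h => lo_ne_of_lt _ hyx (congrArg some h)
    have hcx : c ≠ x := fun h => lo_ne_of_lt _ (lo_lt_trans _ hzy hyx) (congrArg some h)
    rcases lo_total P (some c) none with hc0 | hc0 | hc0
    · -- in P : c ≺ ∅ ≺ b ≺ x.  A-pattern with (x, c), τ = ∅.
      refine ⟨x, c, none, fun h => hcx h.symm, by simp, by simp, ?_, ?_, ?_⟩
      · exact ⟨P', hP'S, hzx', hnc', hnc', P'.le_refl _⟩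
      · exact ⟨P, hPS, lo_lt_trans _ hnb hyx, hc0, P.le_refl _⟩
      · obtain ⟨Q, hQS, hq1, hq2⟩ := hcyc x c ⟨P', hP'S, hzx', hnc'⟩
        exact ⟨Q, hQS, hq1, hq2, hq2⟩
    · exact absurd hc0 (fun h => nomatch h)
    · -- ∅ ≺ c in P
      rcases lo_total P' (some b) none with hb0 | hb0 | hb0
      · -- in P' : b ≺ ∅ ≺ c ≺ x.  A-pattern with (x, b), τ = ∅.
        refine ⟨x, b, none, fun h => hbx h.symm, by simp, by simp, ?_, ?_, ?_⟩
        · exact ⟨P, hPS, hyx, hnb, hnb, P.le_refl _⟩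
        · exact ⟨P', hP'S, lo_lt_trans _ hnc' hzx', hb0, P'.le_refl _⟩
        · obtain ⟨Q, hQS, hq1, hq2⟩ := hcyc x b ⟨P, hPS, hyx, hnb⟩
          exact ⟨Q, hQS, hq1, hq2, hq2⟩
      · exact absurd hb0 (fun h => nomatch h)
      · -- B-pattern : a1 = x, a2 = b, τ = some c
        have hside := sp_sides ord (hSP P hPS) (hSP P' hP'S) hzy hyx hyz' hzx'
        refine ⟨x, b, some c, fun h => hbx h.symm,
          fun h => hcx (Option.some.inj h), fun h => hbc (Option.some.inj h).symm, ?_, ?_, ?_⟩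
        · exact ⟨P, hPS, hyx, hnb, hzy, lo_le_of_lt _ hc0⟩
        · exact ⟨P', hP'S, hzx', hyz', lo_le_of_lt _ (lo_lt_trans _ hb0 hyz')⟩
        · obtain ⟨Q, hQS, hq1, hq2⟩ := hcyc x b ⟨P, hPS, hyx, hnb⟩
          exact ⟨Q, hQS, hq1, hq2, sp_pin ord (hSP Q hQS) hside hq1⟩
lemma man_unmatched {μ : Matching M W} {R : Profile M W} (hst : Stable μ R) {m : M}
    (h : ∀ z, z ≠ none → (R.menPref m).lt z none) : μ.menMatch m = none := by
  cases hm : μ.menMatch m with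
  | none => rfl
  | some w =>
    exact absurd (hst.1.1 m)
      (by rw [hm]; exact fun hle => lo_not_le_of_lt _ (h (some w) (by simp)) hle)

lemma woman_unmatched {μ : Matching M W} {R : Profile M W} (hst : Stable μ R) {w : W}
    (h : ∀ z, z ≠ none → (R.womenPref w).lt z none) : μ.womenMatch w = none := by
  cases hm : μ.womenMatch w with
  | none => rfl
  | some m =>
    exact absurd (hst.1.2 w)
      (by rw [hm]; exact fun hle => lo_not_le_of_lt _ (h (some m) (by simp)) hle)

/-- Forcing lemma for the women's side: at the profile where `wb` reports her
"P2-type" preference, every stable matching assigns `ma` to `wb`. -/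
lemma forcingW (R : Profile M W) (μ : Matching M W) (hst : Stable μ R)
    (ma mb : M) (τ : Option M) (wa wb : W) (σ : Option W)
    (hab : ma ≠ mb) (hτa : τ ≠ some ma) (hτb : τ ≠ some mb)
    (hwab : wa ≠ wb) (hσa : σ ≠ some wa) (hσb : σ ≠ some wb)
    (hma1 : (R.menPref ma).lt (some wb) (some wa))
    (hma2 : (R.menPref ma).lt none (some wb))
    (hma3 : (R.menPref ma).lt σ (some wb))
    (hmb1 : (R.menPref mb).lt (some wa) (some wb))
    (hmb2 : (R.menPref mb).lt none (some wa))
    (hmb3 : (R.menPref mb).lt σ (some wa))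
    (hm3 : ∀ m3, τ = some m3 → (R.menPref m3).lt (some wb) (some wa) ∧
      (R.menPref m3).lt none (some wb) ∧ (R.menPref m3).lt σ (some wb))
    (hinactM : ∀ m, m ≠ ma → m ≠ mb → τ ≠ some m →
      ∀ z, z ≠ none → (R.menPref m).lt z none)
    (hwb1 : (R.womenPref wb).lt τ (some ma))
    (hwb2 : (R.womenPref wb).lt (some mb) τ)
    (hwb3 : (R.womenPref wb).le none τ)
    (hwa1 : (R.womenPref wa).lt (some ma) (some mb))
    (hwa2 : (R.womenPref wa).lt none (some ma))
    (hwa3 : (R.womenPref wa).lt τ (some ma))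
    (hinactW : ∀ w, w ≠ wa → w ≠ wb → σ ≠ some w →
      ∀ z, z ≠ none → (R.womenPref w).lt z none) :
    μ.womenMatch wb = some ma := by
  classical
  have hwb0a : (R.womenPref wb).lt none (some ma) := lo_lt_of_le_of_lt _ hwb3 hwb1
  have hma0a : (R.menPref ma).lt none (some wa) := lo_lt_trans _ hma2 hma1
  have hmasa : (R.menPref ma).lt σ (some wa) := lo_lt_trans _ hma3 hma1
  have hclassM : ∀ (w : W) (m : M), μ.womenMatch w = some m →
      m = ma ∨ m = mb ∨ τ = some m := by
    intro w m hm
    by_contra hcon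
    push_neg at hcon
    have h1 := man_unmatched hst (hinactM m hcon.1 hcon.2.1 hcon.2.2)
    rw [(μ.consistent m w).2 hm] at h1
    exact nomatch h1
  have hclassW : ∀ (m : M) (w : W), μ.menMatch m = some w →
      w = wa ∨ w = wb ∨ σ = some w := by
    intro m w hw
    by_contra hcon
    push_neg at hcon
    have h1 := woman_unmatched hst (hinactW w hcon.1 hcon.2.1 hcon.2.2)
    rw [(μ.consistent m w).1 hw] at h1
    exact nomatch h1
  -- the recurring sub-argument: if `wa` is matched to `ma`, then `mb` together
  -- with `wa` blocks (given `wb`'s partner is not `mb`).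
  have hkey : ∀ (hwaM : μ.womenMatch wa = some ma), μ.womenMatch wb ≠ some mb → False := by
    intro hwaM hwbnot
    rcases hq2 : μ.menMatch mb with _ | v'
    · exact hst.2 mb wa ⟨by rw [hq2]; exact hmb2, by rw [hwaM]; exact hwa1⟩
    · rcases hclassW mb v' hq2 with h'' | h'' | h''
      · rw [h''] at hq2
        have e1 : μ.womenMatch wa = some mb := (μ.consistent mb wa).1 hq2
        exact hab (Option.some.inj (hwaM.symm.trans e1))
      · rw [h''] at hq2
        exact hwbnot ((μ.consistent mb wb).1 hq2)
      · exact hst.2 mb wa ⟨by rw [hq2, ← h'']; exact hmb3, by rw [hwaM]; exact hwa1⟩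
  rcases hpw : μ.womenMatch wb with _ | m
  · -- wb unmatched : impossible
    exfalso
    rcases hq1 : μ.menMatch ma with _ | w
    · exact hst.2 ma wb ⟨by rw [hq1]; exact hma2, by rw [hpw]; exact hwb0a⟩
    · rcases hclassW ma w hq1 with h | h | h
      · rw [h] at hq1
        exact hkey ((μ.consistent ma wa).1 hq1) (by rw [hpw]; exact fun hh => nomatch hh)
      · rw [h] at hq1
        have := (μ.consistent ma wb).1 hq1
        rw [hpw] at this
        exact nomatch this
      · exact hst.2 ma wb ⟨by rw [hq1, ← h]; exact hma3, by rw [hpw]; exact hwb0a⟩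
  · rcases hclassM wb m hpw with h | h | h
    · exact congrArg some h
    · exfalso
      rw [h] at hpw
      -- wb matched to mb
      cases hττ : τ with
      | none =>
        rw [hττ] at hwb2
        exact lo_not_le_of_lt _ hwb2 (by have := hst.1.2 wb; rwa [hpw] at this)
      | some m3 =>
        obtain ⟨h31, h32, h33⟩ := hm3 m3 hττ
        have hm3a : m3 ≠ ma := fun hh => hτa (hττ.trans (congrArg some hh))
        have hm3b : m3 ≠ mb := fun hh => hτb (hττ.trans (congrArg some hh))
        rw [hττ] at hwb1 hwb2 hwa3
        rcases hq3 : μ.menMatch m3 with _ | w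
        · exact hst.2 m3 wb ⟨by rw [hq3]; exact h32, by rw [hpw]; exact hwb2⟩
        · rcases hclassW m3 w hq3 with h' | h' | h'
          · rw [h'] at hq3
            have hwaM : μ.womenMatch wa = some m3 := (μ.consistent m3 wa).1 hq3
            rcases hq1 : μ.menMatch ma with _ | v
            · exact hst.2 ma wa ⟨by rw [hq1]; exact hma0a, by rw [hwaM]; exact hwa3⟩
            · rcases hclassW ma v hq1 with h'' | h'' | h''
              · rw [h''] at hq1
                have e1 : μ.womenMatch wa = some ma := (μ.consistent ma wa).1 hq1
                exact hm3a (Option.some.inj (hwaM.symm.trans e1))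
              · rw [h''] at hq1
                have e1 : μ.womenMatch wb = some ma := (μ.consistent ma wb).1 hq1
                exact hab (Option.some.inj (e1.symm.trans hpw))
              · exact hst.2 ma wa ⟨by rw [hq1, ← h'']; exact hmasa, by rw [hwaM]; exact hwa3⟩
          · rw [h'] at hq3
            have e1 : μ.womenMatch wb = some m3 := (μ.consistent m3 wb).1 hq3
            exact hm3b (Option.some.inj (e1.symm.trans hpw))
          · exact hst.2 m3 wb ⟨by rw [hq3, ← h']; exact h33, by rw [hpw]; exact hwb2⟩
    · exfalso
      -- wb matched to the τ-man m
      have hmma : m ≠ ma := fun hh => hτa (h.trans (congrArg some hh))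
      have hmmb : m ≠ mb := fun hh => hτb (h.trans (congrArg some hh))
      rw [h] at hwb1 hwb2 hwa3
      rcases hq1 : μ.menMatch ma with _ | v
      · exact hst.2 ma wb ⟨by rw [hq1]; exact hma2, by rw [hpw]; exact hwb1⟩
      · rcases hclassW ma v hq1 with h' | h' | h'
        · rw [h'] at hq1
          exact hkey ((μ.consistent ma wa).1 hq1)
            (by rw [hpw]; exact fun hh => hmmb (Option.some.inj hh))
        · rw [h'] at hq1
          have e1 : μ.womenMatch wb = some ma := (μ.consistent ma wb).1 hq1
          exact hmma (Option.some.inj (hpw.symm.trans e1))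
        · exact hst.2 ma wb ⟨by rw [hq1, ← h']; exact hma3, by rw [hpw]; exact hwb1⟩
/-- Forcing lemma for the men's side: at the profile where `ma` reports his
"S2-type" preference, every stable matching assigns `wa` to `ma`. -/
lemma forcingM (R : Profile M W) (μ : Matching M W) (hst : Stable μ R)
    (ma mb : M) (τ : Option M) (wa wb : W) (σ : Option W)
    (hab : ma ≠ mb) (hτa : τ ≠ some ma) (hτb : τ ≠ some mb)
    (hwab : wa ≠ wb) (hσa : σ ≠ some wa) (hσb : σ ≠ some wb)
    (hma1 : (R.menPref ma).lt σ (some wa))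
    (hma2 : (R.menPref ma).lt (some wb) σ)
    (hma3 : (R.menPref ma).le none σ)
    (hmb1 : (R.menPref mb).lt (some wa) (some wb))
    (hmb2 : (R.menPref mb).lt none (some wa))
    (hmb3 : (R.menPref mb).lt σ (some wa))
    (hinactM : ∀ m, m ≠ ma → m ≠ mb → τ ≠ some m →
      ∀ z, z ≠ none → (R.menPref m).lt z none)
    (hwb1 : (R.womenPref wb).lt (some mb) (some ma))
    (hwb2 : (R.womenPref wb).lt none (some mb))
    (hwb3 : (R.womenPref wb).lt τ (some mb))
    (hwa1 : (R.womenPref wa).lt (some ma) (some mb))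
    (hwa2 : (R.womenPref wa).lt none (some ma))
    (hwa3 : (R.womenPref wa).lt τ (some ma))
    (hw3 : ∀ w3, σ = some w3 → (R.womenPref w3).lt (some mb) (some ma) ∧
      (R.womenPref w3).lt none (some mb) ∧ (R.womenPref w3).lt τ (some mb))
    (hinactW : ∀ w, w ≠ wa → w ≠ wb → σ ≠ some w →
      ∀ z, z ≠ none → (R.womenPref w).lt z none) :
    μ.menMatch ma = some wa := by
  classical
  have hclassM : ∀ (w : W) (m : M), μ.womenMatch w = some m →
      m = ma ∨ m = mb ∨ τ = some m := by
    intro w m hm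
    by_contra hcon
    push_neg at hcon
    have h1 := man_unmatched hst (hinactM m hcon.1 hcon.2.1 hcon.2.2)
    rw [(μ.consistent m w).2 hm] at h1
    exact nomatch h1
  have hclassW : ∀ (m : M) (w : W), μ.menMatch m = some w →
      w = wa ∨ w = wb ∨ σ = some w := by
    intro m w hw
    by_contra hcon
    push_neg at hcon
    have h1 := woman_unmatched hst (hinactW w hcon.1 hcon.2.1 hcon.2.2)
    rw [(μ.consistent m w).1 hw] at h1
    exact nomatch h1
  -- the σ-woman always prefers `ma` to her own partner (when not matched to him)
  have hw3key : ∀ w3, σ = some w3 → μ.womenMatch w3 ≠ some ma →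
      (R.womenPref w3).lt (μ.womenMatch w3) (some ma) := by
    intro w3 hσ hne
    obtain ⟨k1, k2, k3⟩ := hw3 w3 hσ
    rcases hp3 : μ.womenMatch w3 with _ | u
    · exact lo_lt_trans _ k2 k1
    · rcases hclassM w3 u hp3 with h | h | h
      · rw [h] at hp3; exact absurd hp3 hne
      · rw [h]; exact k1
      · rw [← h]; exact lo_lt_trans _ k3 k1
  -- if `wa` is matched to `mb` then `mb` blocks with `wb` (given `wb` is not
  -- matched to `ma`)
  have hkey : μ.womenMatch wa = some mb → μ.womenMatch wb ≠ some ma → False := by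
    intro hwaM hne
    have hq2 : μ.menMatch mb = some wa := (μ.consistent mb wa).2 hwaM
    rcases hp2 : μ.womenMatch wb with _ | u
    · exact hst.2 mb wb ⟨by rw [hq2]; exact hmb1, by rw [hp2]; exact hwb2⟩
    · rcases hclassM wb u hp2 with h | h | h
      · rw [h] at hp2; exact hne hp2
      · rw [h] at hp2
        have := (μ.consistent mb wb).2 hp2
        rw [hq2] at this
        exact hwab (Option.some.inj this)
      · exact hst.2 mb wb ⟨by rw [hq2]; exact hmb1, by rw [hp2, ← h]; exact hwb3⟩
  rcases hq : μ.menMatch ma with _ | w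
  · -- ma unmatched : impossible
    exfalso
    have hnewb : μ.womenMatch wb ≠ some ma := fun hh => by
      have := (μ.consistent ma wb).2 hh
      rw [hq] at this
      exact nomatch this
    cases hσσ : σ with
    | some w3 =>
      have hp3ne : μ.womenMatch w3 ≠ some ma := fun hh => by
        have := (μ.consistent ma w3).2 hh
        rw [hq] at this
        exact nomatch this
      rw [hσσ] at hma3
      exact hst.2 ma w3 ⟨by
        rw [hq]; exact lo_lt_of_le_of_ne _ hma3 (fun hh => nomatch hh),
        hw3key w3 hσσ hp3ne⟩
    | none =>
      rw [hσσ] at hma1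
      rcases hr : μ.womenMatch wa with _ | u
      · exact hst.2 ma wa ⟨by rw [hq]; exact hma1, by rw [hr]; exact hwa2⟩
      · rcases hclassM wa u hr with h | h | h
        · rw [h] at hr
          have := (μ.consistent ma wa).2 hr
          rw [hq] at this
          exact nomatch this
        · rw [h] at hr
          exact hkey hr hnewb
        · exact hst.2 ma wa ⟨by rw [hq]; exact hma1, by rw [hr, ← h]; exact hwa3⟩
  · rcases hclassW ma w hq with h | h | h
    · exact congrArg some h
    · -- ma matched to wb : impossible
      exfalso
      rw [h] at hq
      cases hσσ : σ with
      | none =>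
        rw [hσσ] at hma2
        exact lo_not_le_of_lt _ hma2 (by have := hst.1.1 ma; rwa [hq] at this)
      | some w3 =>
        have hw3b : w3 ≠ wb := fun hh => hσb (hσσ.trans (congrArg some hh))
        have hp3ne : μ.womenMatch w3 ≠ some ma := fun hh => by
          have := (μ.consistent ma w3).2 hh
          rw [hq] at this
          exact hw3b (Option.some.inj this).symm
        rw [hσσ] at hma2
        exact hst.2 ma w3 ⟨by rw [hq]; exact hma2, hw3key w3 hσσ hp3ne⟩
    · -- ma matched to the σ-woman : impossible
      exfalso
      have hnewb : μ.womenMatch wb ≠ some ma := fun hh => by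
        have := (μ.consistent ma wb).2 hh
        rw [hq] at this
        exact hσb (h.trans (congrArg some (Option.some.inj this)))
      rcases hr : μ.womenMatch wa with _ | u
      · exact hst.2 ma wa ⟨by rw [hq, ← h]; exact hma1, by rw [hr]; exact hwa2⟩
      · rcases hclassM wa u hr with h' | h' | h'
        · rw [h'] at hr
          have := (μ.consistent ma wa).2 hr
          rw [hq] at this
          exact hσa (h.trans (congrArg some (Option.some.inj this)))
        · rw [h'] at hr
          exact hkey hr hnewb
        · exact hst.2 ma wa ⟨by rw [hq, ← h]; exact hma1, by rw [hr, ← h']; exact hwa3⟩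
/-- on an anonymous single-peaked domain with cyclical inclusion
for both sides that satisfies top dominance for neither side, no stable matching
rule is strategy-proof. -/
theorem no_stable_sp_without_top_dominance [Fintype M] [Fintype W]
    [DecidableEq M] [DecidableEq W]
    (ordM : LinearOrder M) (ordW : LinearOrder W) (D : Domain M W)
    (hsp : D.SinglePeakedDomain ordM ordW) (hanon : D.Anonymous)
    (hcim : CyclicalInclusionMen D) (hciw : CyclicalInclusionWomen D)
    (hTDm : ¬ TopDominanceMen D) (hTDw : ¬ TopDominanceWomen D)
    (phi : Profile M W → Matching M W) (hstable : StableOn D phi) :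
    ¬ StrategyProofOn D phi := by
  classical
  intro hSP
  unfold TopDominanceMen at hTDm
  unfold TopDominanceWomen at hTDw
  push_neg at hTDm hTDw
  obtain ⟨m₀, xm, ym, zm, hPm, hPm'⟩ := hTDm
  obtain ⟨w₀, xw, yw, zw, hPw, hPw'⟩ := hTDw
  obtain ⟨ma, mb, τ, hab, hτa, hτb, hWP1, hWP2, hWQ⟩ :=
    extract_gadget ordM (D.women w₀) (hsp.2 w₀) (hciw w₀).2 xw yw zw hPw hPw'
  obtain ⟨wa, wb, σ, hwab, hσa, hσb, hMS1, hMS2, hMT⟩ :=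
    extract_gadget ordW (D.men m₀) (hsp.1 m₀) (hcim m₀).2 xm ym zm hPm hPm'
  choose fS1 hfS1 using fun m => (show ∃ P, P ∈ D.men m ∧
      (P.lt (some wb) (some wa) ∧ P.lt none (some wb) ∧ P.lt σ (some wb) ∧ P.le none σ) by
    rw [hanon.1 m m₀]; exact hMS1)
  choose fS2 hfS2 using fun m => (show ∃ P, P ∈ D.men m ∧
      (P.lt σ (some wa) ∧ P.lt (some wb) σ ∧ P.le none σ) by
    rw [hanon.1 m m₀]; exact hMS2)
  choose fT hfT using fun m => (show ∃ P, P ∈ D.men m ∧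
      (P.lt (some wa) (some wb) ∧ P.lt none (some wa) ∧ P.lt σ (some wa)) by
    rw [hanon.1 m m₀]; exact hMT)
  choose fEm hfEm using fun m => (hcim m).1
  choose fP1 hfP1 using fun w => (show ∃ P, P ∈ D.women w ∧
      (P.lt (some mb) (some ma) ∧ P.lt none (some mb) ∧ P.lt τ (some mb) ∧ P.le none τ) by
    rw [hanon.2 w w₀]; exact hWP1)
  choose fP2 hfP2 using fun w => (show ∃ P, P ∈ D.women w ∧
      (P.lt τ (some ma) ∧ P.lt (some mb) τ ∧ P.le none τ) by
    rw [hanon.2 w w₀]; exact hWP2)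
  choose fQ hfQ using fun w => (show ∃ P, P ∈ D.women w ∧
      (P.lt (some ma) (some mb) ∧ P.lt none (some ma) ∧ P.lt τ (some ma)) by
    rw [hanon.2 w w₀]; exact hWQ)
  choose fEw hfEw using fun w => (hciw w).1
  -- the profile
  set Pstar : Profile M W :=
    ⟨fun m => if m = ma ∨ some m = τ then fS1 m else if m = mb then fT m else fEm m,
     fun w => if w = wb ∨ some w = σ then fP1 w else if w = wa then fQ w else fEw w⟩
    with hPstardef
  have hPma : Pstar.menPref ma = fS1 ma := if_pos (Or.inl rfl)
  have hPmτ : ∀ m3, τ = some m3 → Pstar.menPref m3 = fS1 m3 :=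
    fun m3 hh => if_pos (Or.inr hh.symm)
  have hPmb : Pstar.menPref mb = fT mb := by
    show (if mb = ma ∨ some mb = τ then fS1 mb else if mb = mb then fT mb else fEm mb) = fT mb
    rw [if_neg, if_pos rfl]
    rintro (hh | hh)
    exacts [hab hh.symm, hτb hh.symm]
  have hPmE : ∀ m, m ≠ ma → m ≠ mb → τ ≠ some m → Pstar.menPref m = fEm m := by
    intro m h1 h2 h3
    show (if m = ma ∨ some m = τ then fS1 m else if m = mb then fT m else fEm m) = fEm m
    rw [if_neg, if_neg h2]
    rintro (hh | hh)
    exacts [h1 hh, h3 hh.symm]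
  have hPwb : Pstar.womenPref wb = fP1 wb := if_pos (Or.inl rfl)
  have hPwσ : ∀ w3, σ = some w3 → Pstar.womenPref w3 = fP1 w3 :=
    fun w3 hh => if_pos (Or.inr hh.symm)
  have hPwa : Pstar.womenPref wa = fQ wa := by
    show (if wa = wb ∨ some wa = σ then fP1 wa else if wa = wa then fQ wa else fEw wa) = fQ wa
    rw [if_neg, if_pos rfl]
    rintro (hh | hh)
    exacts [hwab hh, hσa hh.symm]
  have hPwE : ∀ w, w ≠ wa → w ≠ wb → σ ≠ some w → Pstar.womenPref w = fEw w := by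
    intro w h1 h2 h3
    show (if w = wb ∨ some w = σ then fP1 w else if w = wa then fQ w else fEw w) = fEw w
    rw [if_neg, if_neg h1]
    rintro (hh | hh)
    exacts [h2 hh, h3 hh.symm]
  have hmem : D.mem Pstar := by
    constructor
    · intro m
      show (if m = ma ∨ some m = τ then fS1 m else if m = mb then fT m else fEm m) ∈ D.men m
      split_ifs
      exacts [(hfS1 m).1, (hfT m).1, (hfEm m).1]
    · intro w
      show (if w = wb ∨ some w = σ then fP1 w else if w = wa then fQ w else fEw w) ∈ D.women w
      split_ifs
      exacts [(hfP1 w).1, (hfQ w).1, (hfEw w).1]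
  -- deviation profiles
  have hmem1 : D.mem (Pstar.updateWoman wb (fP2 wb)) := by
    refine ⟨hmem.1, fun w => ?_⟩
    show Function.update Pstar.womenPref wb (fP2 wb) w ∈ D.women w
    rcases eq_or_ne w wb with h | h
    · rw [h, Function.update_self]; exact (hfP2 wb).1
    · rw [Function.update_of_ne h]; exact hmem.2 w
  have hmem2 : D.mem (Pstar.updateMan ma (fS2 ma)) := by
    refine ⟨fun m => ?_, hmem.2⟩
    show Function.update Pstar.menPref ma (fS2 ma) m ∈ D.men m
    rcases eq_or_ne m ma with h | h
    · rw [h, Function.update_self]; exact (hfS2 ma).1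
    · rw [Function.update_of_ne h]; exact hmem.1 m
  -- forcing at the first deviation
  have hC1 : (phi (Pstar.updateWoman wb (fP2 wb))).womenMatch wb = some ma := by
    set R := Pstar.updateWoman wb (fP2 wb) with hR
    have hRm : ∀ m, R.menPref m = Pstar.menPref m := fun m => rfl
    have hRwb : R.womenPref wb = fP2 wb := Function.update_self _ _ _
    have hRw : ∀ w, w ≠ wb → R.womenPref w = Pstar.womenPref w :=
      fun w h => Function.update_of_ne h _ _
    refine forcingW R (phi R) (hstable R hmem1) ma mb τ wa wb σ hab hτa hτb hwab hσa hσb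
      ?_ ?_ ?_ ?_ ?_ ?_ ?_ ?_ ?_ ?_ ?_ ?_ ?_ ?_ ?_
    · rw [hRm, hPma]; exact (hfS1 ma).2.1
    · rw [hRm, hPma]; exact (hfS1 ma).2.2.1
    · rw [hRm, hPma]; exact (hfS1 ma).2.2.2.1
    · rw [hRm, hPmb]; exact (hfT mb).2.1
    · rw [hRm, hPmb]; exact (hfT mb).2.2.1
    · rw [hRm, hPmb]; exact (hfT mb).2.2.2
    · intro m3 h3
      rw [hRm, hPmτ m3 h3]
      exact ⟨(hfS1 m3).2.1, (hfS1 m3).2.2.1, (hfS1 m3).2.2.2.1⟩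
    · intro m h1 h2 h3
      rw [hRm, hPmE m h1 h2 h3]
      exact fun z hz => (hfEm m).2 z hz
    · rw [hRwb]; exact (hfP2 wb).2.1
    · rw [hRwb]; exact (hfP2 wb).2.2.1
    · rw [hRwb]; exact (hfP2 wb).2.2.2
    · rw [hRw wa hwab, hPwa]; exact (hfQ wa).2.1
    · rw [hRw wa hwab, hPwa]; exact (hfQ wa).2.2.1
    · rw [hRw wa hwab, hPwa]; exact (hfQ wa).2.2.2
    · intro w h1 h2 h3
      rw [hRw w h2, hPwE w h1 h2 h3]
      exact fun z hz => (hfEw w).2 z hz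
  -- forcing at the second deviation
  have hC2 : (phi (Pstar.updateMan ma (fS2 ma))).menMatch ma = some wa := by
    set R := Pstar.updateMan ma (fS2 ma) with hR
    have hRw : ∀ w, R.womenPref w = Pstar.womenPref w := fun w => rfl
    have hRma : R.menPref ma = fS2 ma := Function.update_self _ _ _
    have hRm : ∀ m, m ≠ ma → R.menPref m = Pstar.menPref m :=
      fun m h => Function.update_of_ne h _ _
    refine forcingM R (phi R) (hstable R hmem2) ma mb τ wa wb σ hab hτa hτb hwab hσa hσb
      ?_ ?_ ?_ ?_ ?_ ?_ ?_ ?_ ?_ ?_ ?_ ?_ ?_ ?_ ?_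
    · rw [hRma]; exact (hfS2 ma).2.1
    · rw [hRma]; exact (hfS2 ma).2.2.1
    · rw [hRma]; exact (hfS2 ma).2.2.2
    · rw [hRm mb (Ne.symm hab), hPmb]; exact (hfT mb).2.1
    · rw [hRm mb (Ne.symm hab), hPmb]; exact (hfT mb).2.2.1
    · rw [hRm mb (Ne.symm hab), hPmb]; exact (hfT mb).2.2.2
    · intro m h1 h2 h3
      rw [hRm m h1, hPmE m h1 h2 h3]
      exact fun z hz => (hfEm m).2 z hz
    · rw [hRw, hPwb]; exact (hfP1 wb).2.1
    · rw [hRw, hPwb]; exact (hfP1 wb).2.2.1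
    · rw [hRw, hPwb]; exact (hfP1 wb).2.2.2.1
    · rw [hRw, hPwa]; exact (hfQ wa).2.1
    · rw [hRw, hPwa]; exact (hfQ wa).2.2.1
    · rw [hRw, hPwa]; exact (hfQ wa).2.2.2
    · intro w3 h3
      rw [hRw, hPwσ w3 h3]
      exact ⟨(hfP1 w3).2.1, (hfP1 w3).2.2.1, (hfP1 w3).2.2.2.1⟩
    · intro w h1 h2 h3
      rw [hRw, hPwE w h1 h2 h3]
      exact fun z hz => (hfEw w).2 z hz
  -- main branching
  have hstar := hstable Pstar hmem
  by_cases hcase : (phi Pstar).womenMatch wb = some ma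
  · -- the man ma manipulates via fS2
    have hqa : (phi Pstar).menMatch ma = some wb := ((phi Pstar).consistent ma wb).2 hcase
    have hsp1 := (hSP Pstar hmem).1 ma (fS2 ma) ((hfS2 ma).1)
    rw [hqa, hC2, hPma] at hsp1
    exact lo_not_le_of_lt _ (hfS1 ma).2.1 hsp1
  · -- the woman wb manipulates via fP2
    have hkey : (Pstar.womenPref wb).lt ((phi Pstar).womenMatch wb) (some ma) := by
      rw [hPwb]
      rcases hp : (phi Pstar).womenMatch wb with _ | m
      · exact lo_lt_trans _ (hfP1 wb).2.2.1 (hfP1 wb).2.1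
      · have hclass : m = ma ∨ m = mb ∨ τ = some m := by
          by_contra hcon
          push_neg at hcon
          have h1 : (phi Pstar).menMatch m = none := by
            apply man_unmatched hstar
            rw [hPmE m hcon.1 hcon.2.1 hcon.2.2]
            exact fun z hz => (hfEm m).2 z hz
          rw [((phi Pstar).consistent m wb).2 hp] at h1
          exact nomatch h1
        rcases hclass with h | h | h
        · rw [h] at hp; exact absurd hp hcase
        · rw [h]; exact (hfP1 wb).2.1
        · rw [← h]; exact lo_lt_trans _ (hfP1 wb).2.2.2.1 (hfP1 wb).2.1
    have hsp2 := (hSP Pstar hmem).2 wb (fP2 wb) ((hfP2 wb).1)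
    rw [hC1] at hsp2
    exact lo_not_le_of_lt _ hkey hsp2
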